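/- arXiv:1012.1390 — 4 statements merged into one kernel-verified Lean document; each statement's English description precedes it below -/
import Mathlib

section
/- Let Y and Z be closed subspaces of a Banach space X with Hausdorff distance d = d(Y,Z) (where d(Y,Z) = max{sup{dist(y,Z) : y ∈ Y, ‖y‖ ≤ 1}, sup{dist(z,Y) : z ∈ Z, ‖z‖ ≤ 1}}). Suppose P : X → X is a bounded linear projection onto Y with ‖P‖ < d⁻¹ - 1. Then the restriction of P to Z is a bijection from Z onto Y. -/
open NormedSpace Metric

noncomputable section

universe u v w

/-- The Hausdorff distance between two subspaces of a normed space, computed via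
their unit balls: `d(Y,Z) = max {sup {dist(y,Z) : y ∈ Y, ‖y‖ ≤ 1}, sup {dist(z,Y) : z ∈ Z, ‖z‖ ≤ 1}}`. -/
def subHausdorffDist (X : Type u) [NormedAddCommGroup X] [NormedSpace ℂ X]
    (Y Z : Submodule ℂ X) : ℝ :=
  max (sSup ((fun y => Metric.infDist y (Z : Set X)) '' {y : X | y ∈ Y ∧ ‖y‖ ≤ 1}))
      (sSup ((fun z => Metric.infDist z (Y : Set X)) '' {z : X | z ∈ Z ∧ ‖z‖ ≤ 1}))

/-- From a bound on the unit-ball sup distance, get approximate elements with any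
strictly larger constant. -/
lemma approx_of_sSup_le {X : Type u} [NormedAddCommGroup X] [NormedSpace ℂ X]
    (Y Z : Submodule ℂ X) (d d' : ℝ)
    (hd : sSup ((fun y => Metric.infDist y (Z : Set X)) '' {y : X | y ∈ Y ∧ ‖y‖ ≤ 1}) ≤ d)
    (hdd' : d < d') (y : X) (hy : y ∈ Y) :
    ∃ z ∈ Z, ‖y - z‖ ≤ d' * ‖y‖ := by
  rcases eq_or_ne y 0 with rfl | hy0
  · exact ⟨0, Z.zero_mem, by simp⟩
  · have hny : (0:ℝ) < ‖y‖ := norm_pos_iff.mpr hy0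
    set c : ℂ := (‖y‖ : ℂ) with hc
    have hc0 : c ≠ 0 := by
      simp [hc, hny.ne']
    set u : X := c⁻¹ • y with hu
    have huY : u ∈ Y := Y.smul_mem _ hy
    have hun : ‖u‖ = 1 := by
      rw [hu, norm_smul, norm_inv, hc, Complex.norm_real, norm_norm,
        inv_mul_cancel₀ hny.ne']
    have hmem : Metric.infDist u (Z : Set X) ∈
        ((fun y => Metric.infDist y (Z : Set X)) '' {y : X | y ∈ Y ∧ ‖y‖ ≤ 1}) :=
      ⟨u, ⟨huY, le_of_eq hun⟩, rfl⟩
    have hbdd : BddAbove ((fun y => Metric.infDist y (Z : Set X)) '' {y : X | y ∈ Y ∧ ‖y‖ ≤ 1}) := by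
      refine ⟨1, ?_⟩
      rintro _ ⟨x, ⟨-, hx1⟩, rfl⟩
      calc Metric.infDist x (Z : Set X) ≤ dist x 0 :=
            Metric.infDist_le_dist_of_mem Z.zero_mem
        _ = ‖x‖ := by simp
        _ ≤ 1 := hx1
    have h1 : Metric.infDist u (Z : Set X) < d' := lt_of_le_of_lt (le_trans (le_csSup hbdd hmem) hd) hdd'
    obtain ⟨z, hzZ, hz⟩ := (Metric.infDist_lt_iff ⟨0, Z.zero_mem⟩).mp h1
    refine ⟨c • z, Z.smul_mem _ hzZ, ?_⟩
    have : y - c • z = c • (u - z) := by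
      rw [smul_sub, hu, smul_inv_smul₀ hc0]
    rw [this, norm_smul, hc, Complex.norm_real, norm_norm]
    rw [dist_eq_norm] at hz
    nlinarith

/-- Surjectivity by successive approximation. -/
lemma surj_of_approx {X : Type u} [NormedAddCommGroup X] [NormedSpace ℂ X] [CompleteSpace X]
    (Y Z : Submodule ℂ X) (hZ : IsClosed (Z : Set X)) (P : X →L[ℂ] X)
    (hYmem : ∀ x, P x ∈ Y) (C r : ℝ) (hC : 0 ≤ C) (hr0 : 0 ≤ r) (hr1 : r < 1)
    (happrox : ∀ y ∈ Y, ∃ z ∈ Z, ‖z‖ ≤ C * ‖y‖ ∧ ‖y - P z‖ ≤ r * ‖y‖)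
    (y : X) (hy : y ∈ Y) : ∃ z ∈ Z, P z = y := by
  have happrox' : ∀ v : X, ∃ z : X,
      v ∈ Y → z ∈ Z ∧ ‖z‖ ≤ C * ‖v‖ ∧ ‖v - P z‖ ≤ r * ‖v‖ := by
    intro v
    by_cases hv : v ∈ Y
    · obtain ⟨z, h1, h2⟩ := happrox v hv
      exact ⟨z, fun _ => ⟨h1, h2⟩⟩
    · exact ⟨0, fun h => absurd h hv⟩
  choose F hF using happrox'
  set w : ℕ → X := fun n => Nat.rec y (fun _ v => v - P (F v)) n with hw
  have hw0 : w 0 = y := rfl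
  have hwsucc : ∀ n, w (n+1) = w n - P (F (w n)) := fun n => rfl
  have hwY : ∀ n, w n ∈ Y := by
    intro n
    induction n with
    | zero => exact hy
    | succ n ih => rw [hwsucc]; exact Y.sub_mem ih (hYmem _)
  have hwn : ∀ n, ‖w n‖ ≤ r ^ n * ‖y‖ := by
    intro n
    induction n with
    | zero => simp [hw0]
    | succ n ih =>
      have h := (hF (w n) (hwY n)).2.2
      rw [hwsucc]
      calc ‖w n - P (F (w n))‖ ≤ r * ‖w n‖ := h
        _ ≤ r * (r ^ n * ‖y‖) := by nlinarith
        _ = r ^ (n+1) * ‖y‖ := by ring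
  have hFn : ∀ n, ‖F (w n)‖ ≤ C * ‖y‖ * r ^ n := by
    intro n
    have h := (hF (w n) (hwY n)).2.1
    have h2 := hwn n
    nlinarith
  have hsummable : Summable (fun n => F (w n)) := by
    refine Summable.of_norm_bounded (g := fun n => C * ‖y‖ * r ^ n) ?_ hFn
    exact (summable_geometric_of_lt_one hr0 hr1).mul_left _
  set z : X := ∑' n, F (w n) with hz
  have hsum : HasSum (fun n => F (w n)) z := hsummable.hasSum
  have hzZ : z ∈ Z := by
    refine hZ.mem_of_tendsto hsum.tendsto_sum_nat (Filter.Eventually.of_forall fun n => ?_)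
    exact Submodule.sum_mem Z (fun i _ => (hF (w i) (hwY i)).1)
  have hPsum : HasSum (fun n => P (F (w n))) (P z) := hsum.mapL P
  have hPsum' : HasSum (fun n => w n - w (n+1)) (P z) := by
    convert hPsum using 2 with n
    rw [hwsucc, sub_sub_cancel]
  have htel : Filter.Tendsto (fun N => ∑ i ∈ Finset.range N, (w i - w (i+1)))
      Filter.atTop (nhds y) := by
    have heq : ∀ N, ∑ i ∈ Finset.range N, (w i - w (i+1)) = y - w N := by
      intro N; rw [Finset.sum_range_sub' w N, hw0]
    simp only [heq]
    have hw0' : Filter.Tendsto w Filter.atTop (nhds 0) := by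
      have hnorm0 : Filter.Tendsto (fun n => r ^ n * ‖y‖) Filter.atTop (nhds 0) := by
        have := (tendsto_pow_atTop_nhds_zero_of_lt_one hr0 hr1).mul_const ‖y‖
        simpa using this
      refine squeeze_zero_norm (fun n => hwn n) hnorm0
    have h := (tendsto_const_nhds (x := y) (f := Filter.atTop (α := ℕ))).sub hw0'
    rw [sub_zero] at h
    exact h
  have : P z = y := tendsto_nhds_unique hPsum'.tendsto_sum_nat htel
  exact ⟨z, hzZ, this⟩

theorem stmt0 {X : Type u} [NormedAddCommGroup X] [NormedSpace ℂ X] [CompleteSpace X]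
    (Y Z : Submodule ℂ X) (hY : IsClosed (Y : Set X)) (hZ : IsClosed (Z : Set X))
    (P : X →L[ℂ] X) (hproj : ∀ x, P (P x) = P x) (hrange : LinearMap.range (P : X →ₗ[ℂ] X) = Y)
    (hnorm : ‖P‖ < (subHausdorffDist X Y Z)⁻¹ - 1) :
    Set.BijOn P (Z : Set X) (Y : Set X) := by
  set d := subHausdorffDist X Y Z with hd
  have hYmem : ∀ x, P x ∈ Y := fun x => hrange ▸ ⟨x, rfl⟩
  have hPfix : ∀ y ∈ Y, P y = y := by
    intro y hy
    rw [← hrange] at hy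
    obtain ⟨x, rfl⟩ := hy
    exact hproj x
  -- d > 0 and (1 + ‖P‖) * d < 1
  have hd0 : 0 < d := by
    by_contra h
    push_neg at h
    have : d⁻¹ ≤ 0 := inv_nonpos.mpr h
    have := norm_nonneg P
    linarith
  have hkey : (1 + ‖P‖) * d < 1 := by
    have h1 : 1 + ‖P‖ < d⁻¹ := by linarith
    calc (1 + ‖P‖) * d < d⁻¹ * d := by
          have := hd0; nlinarith
      _ = 1 := inv_mul_cancel₀ hd0.ne'
  set d' : ℝ := (d + (1 + ‖P‖)⁻¹) / 2 with hd'
  have hP1 : (0:ℝ) < 1 + ‖P‖ := by have := norm_nonneg P; linarith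
  have h2 : d < (1 + ‖P‖)⁻¹ := by
    nlinarith [mul_inv_cancel₀ hP1.ne']
  have hdd' : d < d' := by rw [hd']; linarith
  have hd'0 : 0 < d' := lt_trans hd0 hdd'
  have hd'key : (1 + ‖P‖) * d' < 1 := by
    rw [hd']
    nlinarith [mul_inv_cancel₀ hP1.ne']
  -- the two sSup bounds
  have hsup1 : sSup ((fun y => Metric.infDist y (Z : Set X)) '' {y : X | y ∈ Y ∧ ‖y‖ ≤ 1}) ≤ d :=
    le_max_left _ _
  have hsup2 : sSup ((fun z => Metric.infDist z (Y : Set X)) '' {z : X | z ∈ Z ∧ ‖z‖ ≤ 1}) ≤ d :=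
    le_max_right _ _
  -- lower bound: ∀ z ∈ Z, (1 - (1+‖P‖)d') ‖z‖ ≤ ‖P z‖
  have hlower : ∀ z ∈ Z, (1 - (1 + ‖P‖) * d') * ‖z‖ ≤ ‖P z‖ := by
    intro z hzZ
    obtain ⟨y, hyY, hy⟩ := approx_of_sSup_le Z Y d d' hsup2 hdd' z hzZ
    have h1 : ‖P (z - y)‖ ≤ ‖P‖ * ‖z - y‖ := P.le_opNorm _
    have h2 : P z = y + P (z - y) := by
      have := hPfix y hyY
      rw [map_sub, this]; abel
    have h3 : ‖y‖ ≤ ‖P z‖ + ‖P (z - y)‖ := by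
      rw [h2]
      calc ‖y‖ = ‖(y + P (z - y)) - P (z - y)‖ := by rw [add_sub_cancel_right]
        _ ≤ ‖y + P (z - y)‖ + ‖P (z - y)‖ := norm_sub_le _ _
    have h4 : ‖z‖ - ‖z - y‖ ≤ ‖y‖ := by
      have := norm_sub_norm_le z y  -- ‖z‖ - ‖y‖ ≤ ‖z - y‖
      linarith
    have h5 : ‖P‖ * ‖z - y‖ ≤ ‖P‖ * (d' * ‖z‖) := by
      have := norm_nonneg P; nlinarith
    nlinarith [norm_nonneg (z - y), norm_nonneg z]
  have hpos : 0 < 1 - (1 + ‖P‖) * d' := by linarith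
  constructor
  · exact fun z _ => hYmem z
  constructor
  · -- injectivity
    intro z1 hz1 z2 hz2 hPz
    have hsub : z1 - z2 ∈ Z := Z.sub_mem hz1 hz2
    have := hlower (z1 - z2) hsub
    rw [map_sub] at this
    rw [hPz, sub_self, norm_zero] at this
    have hz0 : ‖z1 - z2‖ ≤ 0 := by nlinarith [norm_nonneg (z1 - z2)]
    have : z1 - z2 = 0 := norm_le_zero_iff.mp hz0
    exact sub_eq_zero.mp this
  · -- surjectivity
    intro y hy
    have happrox : ∀ v ∈ Y, ∃ z ∈ Z, ‖z‖ ≤ (1 + d') * ‖v‖ ∧ ‖v - P z‖ ≤ (‖P‖ * d') * ‖v‖ := by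
      intro v hv
      obtain ⟨z, hzZ, hz⟩ := approx_of_sSup_le Y Z d d' hsup1 hdd' v hv
      refine ⟨z, hzZ, ?_, ?_⟩
      · calc ‖z‖ = ‖v - (v - z)‖ := by rw [sub_sub_cancel]
          _ ≤ ‖v‖ + ‖v - z‖ := norm_sub_le _ _
          _ ≤ ‖v‖ + d' * ‖v‖ := by linarith
          _ = (1 + d') * ‖v‖ := by ring
      · have h1 : v - P z = P (v - z) := by
          rw [map_sub, hPfix v hv]
        rw [h1]
        calc ‖P (v - z)‖ ≤ ‖P‖ * ‖v - z‖ := P.le_opNorm _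
          _ ≤ ‖P‖ * (d' * ‖v‖) := by have := norm_nonneg P; nlinarith
          _ = (‖P‖ * d') * ‖v‖ := by ring
    have hr1 : ‖P‖ * d' < 1 := by nlinarith
    obtain ⟨z, hzZ, hPz⟩ := surj_of_approx Y Z hZ P hYmem (1 + d') (‖P‖ * d')
      (by positivity) (by positivity) hr1 happrox y hy
    exact ⟨z, hzZ, hPz⟩
end
end

section
/- Let Y and Z be closed subspaces of a Banach space X with Hausdorff distance d = d(Y,Z), and let P : X → X be a bounded projection onto Y with ‖P‖ < d⁻¹ - 1. Then the inverse α : Y → Z of P restricted to Z satisfies ‖α‖ ≤ (1+d)(1 - ‖P‖·d)⁻¹ and ‖α(y) - y‖ ≤ ((1+d)(1 - ‖P‖·d)⁻¹ - 1)·‖y‖ for all y ∈ Y. -/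
set_option maxHeartbeats 800000


open NormedSpace Metric

noncomputable section

universe u v w

private lemma my_le_infDist {α : Type*} [PseudoMetricSpace α] {s : Set α} (hs : s.Nonempty)
    {x : α} {b : ℝ} (h : ∀ y ∈ s, b ≤ dist x y) : b ≤ infDist x s := by
  by_contra hb
  push_neg at hb
  obtain ⟨y, hy, hlt⟩ := (Metric.infDist_lt_iff hs).mp hb
  exact absurd (h y hy) (not_le.mpr hlt)

/-- sup over the unit ball bounds `infDist z Y ≤ s * ‖z‖` for any `z ∈ Z`. -/
private lemma infDist_le_sSup_mul {X : Type u} [NormedAddCommGroup X] [NormedSpace ℂ X]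
    (Y Z : Submodule ℂ X) (z : X) (hz : z ∈ Z) :
    infDist z (Y : Set X) ≤
      sSup ((fun w => Metric.infDist w (Y : Set X)) '' {w : X | w ∈ Z ∧ ‖w‖ ≤ 1}) * ‖z‖ := by
  have hYne : (Y : Set X).Nonempty := ⟨0, Y.zero_mem⟩
  have hbdd : BddAbove ((fun w => Metric.infDist w (Y : Set X)) '' {w : X | w ∈ Z ∧ ‖w‖ ≤ 1}) := by
    refine ⟨1, fun a ha => ?_⟩
    obtain ⟨w, ⟨hwZ, hw1⟩, rfl⟩ := ha
    calc infDist w (Y : Set X) ≤ dist w 0 := infDist_le_dist_of_mem Y.zero_mem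
    _ = ‖w‖ := by simp
    _ ≤ 1 := hw1
  rcases eq_or_ne z 0 with rfl | hz0
  · simp [infDist_zero_of_mem (Y.zero_mem)]
  have hnz : (0 : ℝ) < ‖z‖ := norm_pos_iff.mpr hz0
  set u : X := (‖z‖⁻¹ : ℝ) • z with hu
  have huZ : u ∈ Z := Z.smul_of_tower_mem _ hz
  have hun : ‖u‖ ≤ 1 := by
    rw [hu, norm_smul]
    simp [Real.norm_eq_abs, abs_of_nonneg (inv_nonneg.mpr hnz.le), inv_mul_cancel₀ hnz.ne']
  have hmem : infDist u (Y : Set X) ∈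
      (fun w => Metric.infDist w (Y : Set X)) '' {w : X | w ∈ Z ∧ ‖w‖ ≤ 1} :=
    ⟨u, ⟨huZ, hun⟩, rfl⟩
  have hle : infDist u (Y : Set X) ≤
      sSup ((fun w => Metric.infDist w (Y : Set X)) '' {w : X | w ∈ Z ∧ ‖w‖ ≤ 1}) :=
    le_csSup hbdd hmem
  -- infDist z Y ≤ ‖z‖ * infDist u Y
  have key : ‖z‖⁻¹ * infDist z (Y : Set X) ≤ infDist u (Y : Set X) := by
    apply my_le_infDist hYne
    intro y hy
    have hyY : (‖z‖ : ℝ) • y ∈ (Y : Set X) := Y.smul_of_tower_mem _ hy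
    have h1 : infDist z (Y : Set X) ≤ dist z ((‖z‖ : ℝ) • y) := infDist_le_dist_of_mem hyY
    have h2 : dist u y = ‖z‖⁻¹ * dist z ((‖z‖ : ℝ) • y) := by
      rw [dist_eq_norm, dist_eq_norm, hu]
      rw [show (‖z‖⁻¹ : ℝ) • z - y = (‖z‖⁻¹ : ℝ) • (z - (‖z‖ : ℝ) • y) by
        rw [smul_sub, smul_smul, inv_mul_cancel₀ hnz.ne', one_smul]]
      rw [norm_smul]
      simp [Real.norm_eq_abs, abs_of_nonneg (inv_nonneg.mpr hnz.le)]
    rw [h2]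
    exact mul_le_mul_of_nonneg_left h1 (inv_nonneg.mpr hnz.le)
  have := le_trans key hle
  calc infDist z (Y : Set X) = ‖z‖ * (‖z‖⁻¹ * infDist z (Y : Set X)) := by
        field_simp
  _ ≤ ‖z‖ * sSup ((fun w => Metric.infDist w (Y : Set X)) '' {w : X | w ∈ Z ∧ ‖w‖ ≤ 1}) :=
        mul_le_mul_of_nonneg_left this hnz.le
  _ = _ := mul_comm _ _

theorem stmt1 {X : Type u} [NormedAddCommGroup X] [NormedSpace ℂ X] [CompleteSpace X]
    (Y Z : Submodule ℂ X) (hY : IsClosed (Y : Set X)) (hZ : IsClosed (Z : Set X))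
    (P : X →L[ℂ] X) (hproj : ∀ x, P (P x) = P x) (hrange : LinearMap.range (P : X →ₗ[ℂ] X) = Y)
    (hnorm : ‖P‖ < (subHausdorffDist X Y Z)⁻¹ - 1)
    (α : X → X) (hα : ∀ y ∈ Y, α y ∈ Z ∧ P (α y) = y) :
    ∀ y ∈ Y,
      ‖α y‖ ≤ (1 + subHausdorffDist X Y Z) * (1 - ‖P‖ * subHausdorffDist X Y Z)⁻¹ * ‖y‖ ∧
      ‖α y - y‖ ≤
        ((1 + subHausdorffDist X Y Z) * (1 - ‖P‖ * subHausdorffDist X Y Z)⁻¹ - 1) * ‖y‖ := by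
  set d : ℝ := subHausdorffDist X Y Z with hd
  set p : ℝ := ‖P‖ with hp
  have hp0 : 0 ≤ p := norm_nonneg _
  -- d > 0
  have hd0 : 0 < d := by
    by_contra h
    push_neg at h
    have : d⁻¹ ≤ 0 := inv_nonpos.mpr h
    linarith
  have hdinv : 1 < d⁻¹ := by linarith
  have hd1 : d < 1 := by
    have := (one_lt_inv_iff₀ (a := d)).mp hdinv
    exact this.2
  have hpd1 : p * d + d < 1 := by
    have h := hnorm
    have h2 : p * d < (d⁻¹ - 1) * d := by
      exact mul_lt_mul_of_pos_right h hd0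
    rw [sub_mul, inv_mul_cancel₀ hd0.ne', one_mul] at h2
    linarith
  have hpd : p * d < 1 := by nlinarith
  have hpdpos : 0 < 1 - p * d := by linarith
  -- fixed point constants
  set K : ℝ := (1 - (1 + p) * d)⁻¹ with hK
  set c : ℝ := (1 + d) * (1 - p * d)⁻¹ with hc
  have hKden : 0 < 1 - (1 + p) * d := by nlinarith
  have hKpos : 0 < K := inv_pos.mpr hKden
  have hcpos : 0 < c := by positivity
  have hcfix : 1 + d + p * d * c = c := by
    rw [hc]
    have hq : (1 - p * d) * (1 - p * d)⁻¹ = 1 := mul_inv_cancel₀ hpdpos.ne'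
    linear_combination -(1 + d) * hq
  have hcK : c ≤ K := by
    rw [hc, hK, inv_eq_one_div, inv_eq_one_div, mul_one_div, div_le_div_iff₀ hpdpos hKden]
    nlinarith [sq_nonneg d, hp0, hd0]
  -- basic facts about P
  have hPfix : ∀ y ∈ Y, P y = y := by
    intro y hy
    rw [← hrange] at hy
    obtain ⟨x, rfl⟩ := hy
    exact hproj x
  have hPmem : ∀ x : X, P x ∈ Y := by
    intro x
    rw [← hrange]
    exact ⟨x, rfl⟩
  have hYne : (Y : Set X).Nonempty := ⟨0, Y.zero_mem⟩
  have hZne : (Z : Set X).Nonempty := ⟨0, Z.zero_mem⟩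
  -- infDist bounds from the Hausdorff distance
  have hZtoY : ∀ z ∈ Z, infDist z (Y : Set X) ≤ d * ‖z‖ := by
    intro z hz
    refine le_trans (infDist_le_sSup_mul Y Z z hz) ?_
    apply mul_le_mul_of_nonneg_right _ (norm_nonneg z)
    exact le_max_right _ _
  have hYtoZ : ∀ y ∈ Y, infDist y (Z : Set X) ≤ d * ‖y‖ := by
    intro y hy
    refine le_trans (infDist_le_sSup_mul Z Y y hy) ?_
    apply mul_le_mul_of_nonneg_right _ (norm_nonneg y)
    exact le_max_left _ _
  -- base bound : ∀ w ∈ Z, ‖w‖ ≤ K * ‖P w‖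
  have hbase : ∀ w ∈ Z, ‖w‖ ≤ K * ‖P w‖ := by
    intro w hw
    have hwP : ‖w - P w‖ ≤ (1 + p) * (d * ‖w‖) := by
      have h1 : (1 + p)⁻¹ * ‖w - P w‖ ≤ infDist w (Y : Set X) := by
        apply my_le_infDist hYne
        intro y hy
        have : w - P w = (w - y) - P (w - y) := by
          have h := hPfix y hy
          simp only [map_sub, h]
          abel
        have hb : ‖w - P w‖ ≤ (1 + p) * ‖w - y‖ := by
          rw [this]
          calc ‖(w - y) - P (w - y)‖ ≤ ‖w - y‖ + ‖P (w - y)‖ := norm_sub_le _ _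
          _ ≤ ‖w - y‖ + p * ‖w - y‖ := by
              have := P.le_opNorm (w - y); linarith
          _ = (1 + p) * ‖w - y‖ := by ring
        rw [dist_eq_norm]
        rw [inv_mul_le_iff₀ (by linarith : (0:ℝ) < 1 + p)]
        linarith [hb]
      have h2 := le_trans h1 (hZtoY w hw)
      calc ‖w - P w‖ = (1 + p) * ((1 + p)⁻¹ * ‖w - P w‖) := by
            field_simp
      _ ≤ (1 + p) * (d * ‖w‖) := by
            apply mul_le_mul_of_nonneg_left h2 (by linarith)
    have h3 : ‖w‖ ≤ ‖P w‖ + (1 + p) * (d * ‖w‖) := by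
      calc ‖w‖ = ‖P w + (w - P w)‖ := by rw [show P w + (w - P w) = w by abel]
      _ ≤ ‖P w‖ + ‖w - P w‖ := norm_add_le _ _
      _ ≤ ‖P w‖ + (1 + p) * (d * ‖w‖) := by linarith
    rw [hK, ← div_eq_inv_mul, le_div_iff₀ hKden]
    nlinarith [norm_nonneg w]
  -- inductive step
  have hstep : ∀ b : ℝ, 0 ≤ b → (∀ w ∈ Z, ‖w‖ ≤ b * ‖P w‖) →
      ∀ w ∈ Z, ‖w‖ ≤ (1 + d + p * d * b) * ‖P w‖ := by
    intro b hb hQ w hw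
    have hPwY : P w ∈ Y := hPmem w
    have hcoef : (0:ℝ) < 1 + b * p := by nlinarith
    have key : (‖w‖ - ‖P w‖) * (1 + b * p)⁻¹ ≤ infDist (P w) (Z : Set X) := by
      apply my_le_infDist hZne
      intro z' hz'
      have hwz' : w - z' ∈ Z := Z.sub_mem hw hz'
      have hPwz : P (w - z') = P (P w - z') := by
        simp [map_sub, hproj w]
      have h1 : ‖w - z'‖ ≤ b * ‖P (P w - z')‖ := by
        rw [← hPwz]; exact hQ _ hwz'
      have h2 : ‖P (P w - z')‖ ≤ p * ‖P w - z'‖ := P.le_opNorm _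
      have h3 : ‖w‖ ≤ ‖z'‖ + ‖w - z'‖ := by
        calc ‖w‖ = ‖z' + (w - z')‖ := by rw [show z' + (w - z') = w by abel]
        _ ≤ ‖z'‖ + ‖w - z'‖ := norm_add_le _ _
      have h4 : ‖z'‖ ≤ ‖P w‖ + ‖P w - z'‖ := by
        calc ‖z'‖ = ‖P w - (P w - z')‖ := by rw [show P w - (P w - z') = z' by abel]
        _ ≤ ‖P w‖ + ‖P w - z'‖ := norm_sub_le _ _
      have h5 : ‖w‖ ≤ ‖P w‖ + (1 + b * p) * ‖P w - z'‖ := by nlinarith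
      rw [dist_eq_norm]
      rw [mul_inv_le_iff₀ hcoef]
      linarith
    have h6 : (‖w‖ - ‖P w‖) * (1 + b * p)⁻¹ ≤ d * ‖P w‖ :=
      le_trans key (hYtoZ _ hPwY)
    have h7 : ‖w‖ - ‖P w‖ ≤ (1 + b * p) * (d * ‖P w‖) := by
      calc ‖w‖ - ‖P w‖ = ((‖w‖ - ‖P w‖) * (1 + b * p)⁻¹) * (1 + b * p) := by
            field_simp
      _ ≤ (d * ‖P w‖) * (1 + b * p) := mul_le_mul_of_nonneg_right h6 hcoef.le
      _ = (1 + b * p) * (d * ‖P w‖) := mul_comm _ _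
    nlinarith
  -- the sequence of constants
  set r : ℝ := p * d with hr
  have hr0 : 0 ≤ r := by positivity
  have hr1 : r < 1 := hpd
  have hseq : ∀ n : ℕ, ∀ w ∈ Z, ‖w‖ ≤ (c + r ^ n * (K - c)) * ‖P w‖ := by
    intro n
    induction n with
    | zero => simpa using hbase
    | succ n ih =>
      have hbn : 0 ≤ c + r ^ n * (K - c) := by
        have : 0 ≤ r ^ n * (K - c) := mul_nonneg (pow_nonneg hr0 n) (by linarith)
        linarith
      have := hstep _ hbn ih
      have halg : 1 + d + p * d * (c + r ^ n * (K - c)) = c + r ^ (n + 1) * (K - c) := by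
        have : p * d * (r ^ n * (K - c)) = r ^ (n + 1) * (K - c) := by
          rw [hr, pow_succ]; ring
        nlinarith [hcfix]
      rw [← halg]
      exact this
  -- pass to the limit
  have hlim : ∀ w ∈ Z, ‖w‖ ≤ c * ‖P w‖ := by
    intro w hw
    have htend : Filter.Tendsto (fun n : ℕ => (c + r ^ n * (K - c)) * ‖P w‖)
        Filter.atTop (nhds (c * ‖P w‖)) := by
      have h1 : Filter.Tendsto (fun n : ℕ => r ^ n) Filter.atTop (nhds 0) :=
        tendsto_pow_atTop_nhds_zero_of_lt_one hr0 hr1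
      have h2 : Filter.Tendsto (fun n : ℕ => c + r ^ n * (K - c)) Filter.atTop (nhds (c + 0 * (K - c))) :=
        Filter.Tendsto.add tendsto_const_nhds (h1.mul tendsto_const_nhds)
      simpa using h2.mul tendsto_const_nhds
    exact ge_of_tendsto htend (Filter.Eventually.of_forall (fun n => hseq n w hw))
  -- conclude
  intro y hy
  obtain ⟨hαZ, hαP⟩ := hα y hy
  constructor
  · have := hlim (α y) hαZ
    rw [hαP] at this
    exact this
  · -- second bound
    have hcoef : (0:ℝ) < 1 + c * p := by nlinarith
    have key : ‖α y - y‖ * (1 + c * p)⁻¹ ≤ infDist y (Z : Set X) := by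
      apply my_le_infDist hZne
      intro z' hz'
      have hwz' : α y - z' ∈ Z := Z.sub_mem hαZ hz'
      have h1 : ‖α y - z'‖ ≤ c * ‖P (α y - z')‖ := hlim _ hwz'
      have hPyz : P (α y - z') = P (y - z') := by
        simp [map_sub, hαP, hPfix y hy]
      have h2 : ‖P (y - z')‖ ≤ p * ‖y - z'‖ := P.le_opNorm _
      have h3 : ‖α y - y‖ ≤ ‖α y - z'‖ + ‖z' - y‖ := by
        calc ‖α y - y‖ = ‖(α y - z') + (z' - y)‖ := by rw [show (α y - z') + (z' - y) = α y - y by abel]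
        _ ≤ ‖α y - z'‖ + ‖z' - y‖ := norm_add_le _ _
      have h4 : ‖z' - y‖ = ‖y - z'‖ := norm_sub_rev _ _
      have h1' : ‖α y - z'‖ ≤ c * ‖P (y - z')‖ := by rw [← hPyz]; exact h1
      have h5 : ‖α y - y‖ ≤ (1 + c * p) * ‖y - z'‖ := by
        nlinarith [mul_le_mul_of_nonneg_left h2 hcpos.le]
      rw [dist_eq_norm, mul_inv_le_iff₀ hcoef]
      nlinarith [h5]
    have h6 : ‖α y - y‖ * (1 + c * p)⁻¹ ≤ d * ‖y‖ := le_trans key (hYtoZ y hy)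
    have h7 : ‖α y - y‖ ≤ (1 + c * p) * (d * ‖y‖) := by
      calc ‖α y - y‖ = (‖α y - y‖ * (1 + c * p)⁻¹) * (1 + c * p) := by
            field_simp
      _ ≤ (d * ‖y‖) * (1 + c * p) := mul_le_mul_of_nonneg_right h6 hcoef.le
      _ = (1 + c * p) * (d * ‖y‖) := mul_comm _ _
    have halg : (1 + c * p) * d = c - 1 := by
      rw [hc]
      field_simp
      ring
    calc ‖α y - y‖ ≤ (1 + c * p) * d * ‖y‖ := by linarith [h7, mul_assoc (1 + c*p) d ‖y‖]
    _ = (c - 1) * ‖y‖ := by rw [halg]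
    _ = ((1 + d) * (1 - p * d)⁻¹ - 1) * ‖y‖ := by rw [hc]
end
end

section
/- Let Y and Z be closed subspaces of a Banach space X with Hausdorff distance d = d(Y,Z), and let P : X → X be a bounded projection onto Y with ‖P‖ < d⁻¹ - 1. Then for every z ∈ Z, ‖P(z) - z‖ ≤ d(1 + ‖P‖)‖z‖. -/
open NormedSpace Metric

noncomputable section

universe u v w

theorem stmt2 {X : Type u} [NormedAddCommGroup X] [NormedSpace ℂ X] [CompleteSpace X]
    (Y Z : Submodule ℂ X) (hY : IsClosed (Y : Set X)) (hZ : IsClosed (Z : Set X))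
    (P : X →L[ℂ] X) (hproj : ∀ x, P (P x) = P x) (hrange : LinearMap.range (P : X →ₗ[ℂ] X) = Y)
    (hnorm : ‖P‖ < (subHausdorffDist X Y Z)⁻¹ - 1) :
    ∀ z ∈ Z, ‖P z - z‖ ≤ subHausdorffDist X Y Z * (1 + ‖P‖) * ‖z‖ := by
  intro z hz
  set d := subHausdorffDist X Y Z with hd
  have hYne : (Y : Set X).Nonempty := ⟨0, Y.zero_mem⟩
  have hPfix : ∀ y ∈ Y, P y = y := by
    intro y hy
    rw [← hrange] at hy
    obtain ⟨x, rfl⟩ := hy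
    exact hproj x
  have hpos : (0 : ℝ) < 1 + ‖P‖ := by positivity
  -- key pointwise bound
  have key : ∀ y ∈ (Y : Set X), ‖P z - z‖ ≤ (1 + ‖P‖) * dist z y := by
    intro y hy
    have heq : P z - z = P (z - y) - (z - y) := by
      rw [map_sub, hPfix y hy]; abel
    rw [heq, dist_eq_norm]
    calc ‖P (z - y) - (z - y)‖ ≤ ‖P (z - y)‖ + ‖z - y‖ := norm_sub_le _ _
      _ ≤ ‖P‖ * ‖z - y‖ + 1 * ‖z - y‖ := by
          have := P.le_opNorm (z - y); linarith
      _ = (1 + ‖P‖) * ‖z - y‖ := by ring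
  -- ‖P z - z‖ ≤ (1 + ‖P‖) * infDist z Y
  have h1 : ‖P z - z‖ ≤ (1 + ‖P‖) * infDist z (Y : Set X) := by
    rw [← div_le_iff₀' hpos]
    by_contra h
    push_neg at h
    obtain ⟨y, hy, hlt⟩ := (infDist_lt_iff hYne).mp h
    have h' := (lt_div_iff₀ hpos).mp hlt
    nlinarith [key y hy]
  -- infDist z Y ≤ d * ‖z‖
  have h2 : infDist z (Y : Set X) ≤ d * ‖z‖ := by
    rcases eq_or_ne z 0 with rfl | hz0
    · simp [infDist_zero_of_mem Y.zero_mem]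
    · have hzn : (0 : ℝ) < ‖z‖ := norm_pos_iff.mpr hz0
      set w : X := ((‖z‖ : ℂ))⁻¹ • z with hw
      have hwZ : w ∈ Z := Z.smul_mem _ hz
      have hwn : ‖w‖ = 1 := by
        rw [hw, norm_smul, norm_inv, Complex.norm_real, Real.norm_eq_abs,
          abs_of_pos hzn, inv_mul_cancel₀ hzn.ne']
      have hwd : infDist w (Y : Set X) ≤ d := by
        have hmem : infDist w (Y : Set X) ∈
            ((fun z => Metric.infDist z (Y : Set X)) '' {z : X | z ∈ Z ∧ ‖z‖ ≤ 1}) :=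
          ⟨w, ⟨hwZ, hwn.le⟩, rfl⟩
        have hbdd : BddAbove
            ((fun z => Metric.infDist z (Y : Set X)) '' {z : X | z ∈ Z ∧ ‖z‖ ≤ 1}) := by
          refine ⟨1, ?_⟩
          rintro a ⟨u, ⟨_, hu⟩, rfl⟩
          have := infDist_le_dist_of_mem (x := u) (Y.zero_mem)
          rw [dist_zero_right] at this
          exact this.trans hu
        exact (le_csSup hbdd hmem).trans (le_max_right _ _)
      -- infDist z Y ≤ ‖z‖ * infDist w Y
      have h3 : infDist z (Y : Set X) ≤ ‖z‖ * infDist w (Y : Set X) := by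
        by_contra h
        push_neg at h
        rw [← lt_div_iff₀' hzn] at h
        obtain ⟨y, hy, hlt⟩ := (infDist_lt_iff hYne).mp h
        have hZy : ((‖z‖ : ℂ)) • y ∈ Y := Y.smul_mem _ hy
        have hdz : dist z (((‖z‖ : ℂ)) • y) = ‖z‖ * dist w y := by
          rw [dist_eq_norm, dist_eq_norm]
          have hsub : z - ((‖z‖ : ℂ)) • y = ((‖z‖ : ℂ)) • (w - y) := by
            rw [smul_sub, hw, smul_smul,
              mul_inv_cancel₀ (by exact_mod_cast hzn.ne' : ((‖z‖ : ℂ)) ≠ 0), one_smul]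
          rw [hsub, norm_smul, Complex.norm_real, Real.norm_eq_abs, abs_of_pos hzn]
        have hle := infDist_le_dist_of_mem (x := z) hZy
        rw [hdz] at hle
        have := (lt_div_iff₀' hzn).mp hlt
        linarith
      calc infDist z (Y : Set X) ≤ ‖z‖ * infDist w (Y : Set X) := h3
        _ ≤ ‖z‖ * d := by
            exact mul_le_mul_of_nonneg_left hwd hzn.le
        _ = d * ‖z‖ := by ring
  calc ‖P z - z‖ ≤ (1 + ‖P‖) * infDist z (Y : Set X) := h1
    _ ≤ (1 + ‖P‖) * (d * ‖z‖) := mul_le_mul_of_nonneg_left h2 hpos.le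
    _ = d * (1 + ‖P‖) * ‖z‖ := by ring
end
end

section
/- Let A be a unital Banach algebra and suppose the kernel of the multiplication map π : A ⊗̂ A^{op} → A has a bounded right approximate identity (equivalently, ker π** has a right identity for the first Arens product). Then A is amenable. -/
open NormedSpace Metric Topology

noncomputable section

universe u v w

/-- The Banach-space transpose (adjoint) of a continuous linear map. -/
def dualTranspose {X : Type u} {Y : Type v} [NormedAddCommGroup X] [NormedSpace ℂ X]
    [NormedAddCommGroup Y] [NormedSpace ℂ Y] (f : X →L[ℂ] Y) :
    StrongDual ℂ Y →L[ℂ] StrongDual ℂ X :=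
  (ContinuousLinearMap.compL ℂ X Y ℂ).flip f

/-- The bidual (double adjoint) map `f** : X** → Y**`. -/
def bidualMap {X : Type u} {Y : Type v} [NormedAddCommGroup X] [NormedSpace ℂ X]
    [NormedAddCommGroup Y] [NormedSpace ℂ Y] (f : X →L[ℂ] Y) :
    StrongDual ℂ (StrongDual ℂ X) →L[ℂ] StrongDual ℂ (StrongDual ℂ Y) :=
  dualTranspose (dualTranspose f)

/-- `(T, p)` is (an isometric copy of) the projective tensor product `A ⊗̂ A`:
`p` is a contractive bilinear map with dense span satisfying the universal
property of the projective tensor norm. -/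
structure IsProjTensorProduct (A : Type u) (T : Type v) [NormedAddCommGroup A]
    [NormedSpace ℂ A] [NormedAddCommGroup T] [NormedSpace ℂ T] [CompleteSpace T]
    (p : A →L[ℂ] A →L[ℂ] T) : Prop where
  norm_tmul_le : ∀ a b : A, ‖p a b‖ ≤ ‖a‖ * ‖b‖
  dense_span : Dense (↑(Submodule.span ℂ (Set.range fun ab : A × A => p ab.1 ab.2)) : Set T)
  lift : ∀ {W : Type w} [NormedAddCommGroup W] [NormedSpace ℂ W] [CompleteSpace W]
      (f : A →L[ℂ] A →L[ℂ] W), ∃ g : T →L[ℂ] W, (∀ a b : A, g (p a b) = f a b) ∧ ‖g‖ ≤ ‖f‖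

/-- Amenability of the Banach algebra given by the (bounded, associative) multiplication `μ`
on the Banach space `A`: every continuous derivation into the dual of any Banach
`A`-bimodule is inner.  The bimodule is described by its bounded left and right actions
`l` and `r`; the dual module actions are `(a · f) x = f (r x a)` and `(f · a) x = f (l a x)`. -/
def IsAmenableMul {A : Type u} [NormedAddCommGroup A] [NormedSpace ℂ A] [CompleteSpace A]
    (μ : A →L[ℂ] A →L[ℂ] A) : Prop :=
  ∀ (X : Type u) [NormedAddCommGroup X] [NormedSpace ℂ X] [CompleteSpace X]
    (l : A →L[ℂ] X →L[ℂ] X) (r : X →L[ℂ] A →L[ℂ] X),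
    (∀ a b x, l (μ a b) x = l a (l b x)) →
    (∀ x a b, r (r x a) b = r x (μ a b)) →
    (∀ a x b, r (l a x) b = l a (r x b)) →
    ∀ D : A →L[ℂ] StrongDual ℂ X,
      (∀ a b x, D (μ a b) x = D b (r x a) + D a (l b x)) →
      ∃ f : StrongDual ℂ X, ∀ a x, D a x = f (r x a) - f (l a x)

/-- Two continuous linear maps out of `T` agreeing on elementary tensors agree. -/
theorem clm_ext_of_dense {A : Type u} {T : Type v} [NormedAddCommGroup A] [NormedSpace ℂ A]
    [NormedAddCommGroup T] [NormedSpace ℂ T] [CompleteSpace T]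
    (p : A →L[ℂ] A →L[ℂ] T)
    (hd : Dense (↑(Submodule.span ℂ (Set.range fun ab : A × A => p ab.1 ab.2)) : Set T))
    {W : Type w} [NormedAddCommGroup W] [NormedSpace ℂ W]
    (φ ψ : T →L[ℂ] W) (h : ∀ a b, φ (p a b) = ψ (p a b)) : ∀ t, φ t = ψ t := by
  have heq : Set.EqOn (⇑φ) (⇑ψ)
      (↑(Submodule.span ℂ (Set.range fun ab : A × A => p ab.1 ab.2)) : Set T) := by
    intro t ht
    refine LinearMap.eqOn_span ?_ ht
    rintro _ ⟨⟨a, b⟩, rfl⟩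
    exact h a b
  have := Continuous.ext_on hd φ.continuous ψ.continuous heq
  exact fun t => congrFun this t


/-- The universal property of `hp.lift` transferred to dual-space-valued maps in an
arbitrary universe, via `ULift ℂ` and uniqueness of continuous extensions. -/
theorem lift_dual {A : Type u} {T : Type v} [NormedAddCommGroup A] [NormedSpace ℂ A]
    [NormedAddCommGroup T] [NormedSpace ℂ T] [CompleteSpace T]
    {p : A →L[ℂ] A →L[ℂ] T} (hp : IsProjTensorProduct.{u,v,w} A T p)
    {X : Type x} [NormedAddCommGroup X] [NormedSpace ℂ X]
    (B : A →L[ℂ] A →L[ℂ] StrongDual ℂ X) :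
    ∃ g : T →L[ℂ] StrongDual ℂ X, ∀ a b : A, g (p a b) = B a b := by
  classical
  letI : NormedAddCommGroup (A →L[ℂ] StrongDual ℂ X) := ContinuousLinearMap.toNormedAddCommGroup
  letI : NormedSpace ℂ (A →L[ℂ] StrongDual ℂ X) := ContinuousLinearMap.toNormedSpace
  let e : ULift.{w} ℂ ≃L[ℂ] ℂ := ContinuousLinearEquiv.ulift
  let Bx : X → (A →L[ℂ] A →L[ℂ] ULift.{w} ℂ) := fun x =>
    (ContinuousLinearMap.compL ℂ A (StrongDual ℂ X) (ULift.{w} ℂ)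
      ((e.symm : ℂ →L[ℂ] ULift.{w} ℂ).comp (ContinuousLinearMap.apply ℂ ℂ x))).comp B
  have hBx : ∀ (x : X) (a b : A), Bx x a b = e.symm (B a b x) := by
    intro x a b
    simp [Bx, ContinuousLinearMap.compL_apply]
  have hex := fun x : X => hp.lift (Bx x)
  choose G hG hGn using hex
  have hadd : ∀ x y : X, G (x + y) = G x + G y := by
    intro x y
    refine ContinuousLinearMap.ext (clm_ext_of_dense p hp.dense_span _ _ ?_)
    intro a b
    rw [hG, ContinuousLinearMap.add_apply, hG, hG, hBx, hBx, hBx, map_add (B a b), map_add]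
  have hsmul : ∀ (σ : ℂ) (x : X), G (σ • x) = σ • G x := by
    intro σ x
    refine ContinuousLinearMap.ext (clm_ext_of_dense p hp.dense_span _ _ ?_)
    intro a b
    rw [hG, ContinuousLinearMap.smul_apply, hG, hBx, hBx, map_smul (B a b), map_smul]
  have hBxn : ∀ x, ‖Bx x‖ ≤ ‖B‖ * ‖x‖ := by
    intro x
    refine ContinuousLinearMap.opNorm_le_bound _ (by positivity) (fun a => ?_)
    refine ContinuousLinearMap.opNorm_le_bound _ (by positivity) (fun b => ?_)
    have h1 : ‖Bx x a b‖ = ‖B a b x‖ := by rw [hBx]; rfl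
    rw [h1]
    calc ‖B a b x‖ ≤ ‖B a b‖ * ‖x‖ := (B a b).le_opNorm x
      _ ≤ (‖B‖ * ‖a‖ * ‖b‖) * ‖x‖ :=
        mul_le_mul_of_nonneg_right (B.le_opNorm₂ a b) (norm_nonneg x)
      _ = ‖B‖ * ‖x‖ * ‖a‖ * ‖b‖ := by ring
  let ℓ : T →ₗ[ℂ] X →ₗ[ℂ] ℂ := LinearMap.mk₂ ℂ (fun t x => e (G x t))
    (fun t t' x => show e (G x (t + t')) = e (G x t) + e (G x t') by
      rw [map_add (G x), map_add])
    (fun σ t x => show e (G x (σ • t)) = σ • e (G x t) by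
      rw [map_smul (G x), map_smul])
    (fun t x y => show e (G (x + y) t) = e (G x t) + e (G y t) by
      rw [hadd, ContinuousLinearMap.add_apply, map_add])
    (fun σ t x => show e (G (σ • x) t) = σ • e (G x t) by
      rw [hsmul, ContinuousLinearMap.smul_apply, map_smul])
  have hbound : ∀ t x, ‖ℓ t x‖ ≤ ‖B‖ * ‖t‖ * ‖x‖ := by
    intro t x
    have h1 : ‖ℓ t x‖ = ‖G x t‖ := rfl
    rw [h1]
    calc ‖G x t‖ ≤ ‖G x‖ * ‖t‖ := (G x).le_opNorm t
      _ ≤ (‖B‖ * ‖x‖) * ‖t‖ :=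
        mul_le_mul_of_nonneg_right (le_trans (hGn x) (hBxn x)) (norm_nonneg t)
      _ = ‖B‖ * ‖t‖ * ‖x‖ := by ring
  refine ⟨LinearMap.mkContinuous₂ ℓ ‖B‖ hbound, ?_⟩
  intro a b
  ext x
  show e (G x (p a b)) = B a b x
  rw [hG, hBx]
  simp
set_option maxHeartbeats 2000000 in
theorem stmt10 {A : Type u} [NormedRing A] [NormedAlgebra ℂ A] [NormOneClass A]
    [CompleteSpace A] {T : Type u} [NormedAddCommGroup T] [NormedSpace ℂ T] [CompleteSpace T]
    (p : A →L[ℂ] A →L[ℂ] T) (hp : IsProjTensorProduct A T p)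
    (πh : T →L[ℂ] A) (hπ : ∀ a b : A, πh (p a b) = a * b)
    -- the multiplication of `A ⊗̂ Aᵒᵖ` : `(a ⊗ b) ⋆ (c ⊗ d) = (a c) ⊗ (d b)`
    (m : T →L[ℂ] T →L[ℂ] T)
    (hm : ∀ a b c d : A, m (p a b) (p c d) = p (a * c) (d * b))
    -- `ker π` has a bounded right approximate identity
    (hbai : ∃ M : ℝ, ∀ s : Finset T, (∀ x ∈ s, πh x = 0) → ∀ ε : ℝ, 0 < ε →
      ∃ u : T, πh u = 0 ∧ ‖u‖ ≤ M ∧ ∀ x ∈ s, ‖m x u - x‖ < ε) :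
    IsAmenableMul (ContinuousLinearMap.mul ℂ A) := by
  classical
  intro X _ _ _ l r hl hr hc D hD
  obtain ⟨M, hM⟩ := hbai
  have hμ : ∀ a b : A, ContinuousLinearMap.mul ℂ A a b = a * b := fun _ _ => rfl
  -- basic module identities
  have hr1 : ∀ (x : X) (a : A), r (r x 1) a = r x a := by
    intro x a; rw [hr]; simp [hμ]
  have hr1' : ∀ (x : X) (a : A), r (r x a) 1 = r x a := by
    intro x a; rw [hr]; simp [hμ]
  have hl1 : ∀ (a : A) (x : X), l 1 (l a x) = l a x := by
    intro a x
    have := hl 1 a x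
    rw [hμ, one_mul] at this
    exact this.symm
  have hl1' : ∀ (a : A) (x : X), l a (l 1 x) = l a x := by
    intro a x
    have := hl a 1 x
    rw [hμ, mul_one] at this
    exact this.symm
  set c : StrongDual ℂ X := D 1 with hcdef
  -- the corner derivation D'
  set D' : A →L[ℂ] StrongDual ℂ X :=
    ((ContinuousLinearMap.compL ℂ X X ℂ).flip ((l 1).comp (r.flip 1))).comp D with hD'def
  have hD'app : ∀ (a : A) (x : X), D' a x = D a (l 1 (r x 1)) := by
    intro a x
    simp [hD'def, ContinuousLinearMap.compL_apply, ContinuousLinearMap.flip_apply]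
  have hstar : ∀ x : X, c x = c (r x 1) + c (l 1 x) := by
    intro x
    have := hD 1 1 x
    rw [hμ, one_mul] at this
    simpa [← hcdef] using this
  have hD'eq : ∀ (a : A) (x : X), D a x = c (r x a) + c (l a x) + D' a x := by
    intro a x
    have h1 : D a x = D a (r x 1) + c (l a x) := by
      have := hD 1 a x
      rw [hμ, one_mul] at this
      simpa [← hcdef] using this
    have h2 : D a (r x 1) = c (r x a) + D a (l 1 (r x 1)) := by
      have := hD a 1 (r x 1)
      rw [hμ, mul_one, hr1 x a] at this
      simpa [← hcdef] using this
    rw [h1, h2, hD'app]; ring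
  have hD'der : ∀ (a b : A) (x : X), D' (a * b) x = D' b (r x a) + D' a (l b x) := by
    intro a b x
    have h0 := hD a b (l 1 (r x 1))
    rw [hμ] at h0
    have e1 : r (l 1 (r x 1)) a = l 1 (r x a) := by rw [hc, hr1]
    have e2 : l b (l 1 (r x 1)) = l b (r x 1) := hl1' b (r x 1)
    rw [e1, e2] at h0
    rw [hD'app, hD'app, hD'app, h0, hr1' x a, hc b x 1, hl1 b (r x 1)]
  have hD'R : ∀ (a : A) (x : X), D' a (r x 1) = D' a x := by
    intro a x; rw [hD'app, hD'app, hr1']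
  -- the lifted map g : T →L Dual X,  g (p a b) x = D' b (r x a)
  set B : A →L[ℂ] A →L[ℂ] StrongDual ℂ X :=
    (((ContinuousLinearMap.compL ℂ X X ℂ).comp D').flip).comp r.flip with hBdef
  have hBapp : ∀ (a b : A) (x : X), B a b x = D' b (r x a) := by
    intro a b x
    simp [hBdef, ContinuousLinearMap.compL_apply, ContinuousLinearMap.flip_apply]
  obtain ⟨g, hg⟩ := lift_dual hp B
  -- the identity element E = 1 ⊗ 1 of T
  set E : T := p 1 1 with hEdef
  have hπE : πh E = 1 := by rw [hEdef, hπ, one_mul]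
  have hnE : ‖E‖ ≤ 1 := by
    have := hp.norm_tmul_le 1 1; simpa using this
  have hmE2 : ∀ t, m t E = t := by
    refine clm_ext_of_dense p hp.dense_span (m.flip E) (ContinuousLinearMap.id ℂ T) ?_
    intro a b
    simp [hEdef, ContinuousLinearMap.flip_apply, hm, one_mul, mul_one]
  -- (†1) : g (m (p a 1) t) x = g t (r x a)
  have ht1 : ∀ (a : A) (t : T) (x : X), g (m (p a 1) t) x = g t (r x a) := by
    intro a t x
    have key := clm_ext_of_dense p hp.dense_span (g.comp (m (p a 1)))
      (((ContinuousLinearMap.compL ℂ X X ℂ).flip (r.flip a)).comp g) ?_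
    · have := congrArg (fun φ : StrongDual ℂ X => φ x) (key t)
      simpa [ContinuousLinearMap.compL_apply, ContinuousLinearMap.flip_apply] using this
    · intro c' d
      ext x'
      simp only [ContinuousLinearMap.coe_comp', Function.comp_apply,
        ContinuousLinearMap.compL_apply, ContinuousLinearMap.flip_apply, hm, mul_one, hg, hBapp]
      rw [hr x' a c']
      simp [hμ]
  -- (†2) : g (m (p 1 a) t) x = g t (l a x) + D' a (r x (πh t))
  have ht2 : ∀ (a : A) (t : T) (x : X),
      g (m (p 1 a) t) x = g t (l a x) + D' a (r x (πh t)) := by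
    intro a t x
    have key := clm_ext_of_dense p hp.dense_span (g.comp (m (p 1 a)))
      ((((ContinuousLinearMap.compL ℂ X X ℂ).flip (l a)).comp g)
        + ((ContinuousLinearMap.compL ℂ X X ℂ (D' a)).comp (r.flip.comp πh))) ?_
    · have := congrArg (fun φ : StrongDual ℂ X => φ x) (key t)
      simpa [ContinuousLinearMap.compL_apply, ContinuousLinearMap.flip_apply] using this
    · intro c' d
      ext x'
      simp only [ContinuousLinearMap.coe_comp', Function.comp_apply,
        ContinuousLinearMap.add_apply, ContinuousLinearMap.compL_apply,
        ContinuousLinearMap.flip_apply, hm, one_mul, hg, hBapp, hπ]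
      have hder := hD'der d a (r x' c')
      rw [hr x' c' d, hμ] at hder
      rw [hder, ← hc a x' c']
      ring
  -- the commutator elements
  set k : A → T := fun a => p a 1 - p 1 a with hkdef
  have hπk : ∀ a, πh (k a) = 0 := by
    intro a; simp [hkdef, hπ]
  -- key identity for u with πh u = 0
  have hkey : ∀ (a : A) (x : X) (u : T), πh u = 0 →
      g (E - u) (r x a) - g (E - u) (l a x) = g (k a - m (k a) u) x + D' a x := by
    intro a x u hu
    have hπd : πh (E - u) = 1 := by rw [map_sub, hπE, hu, sub_zero]
    have e1 : g (E - u) (r x a) = g (m (p a 1) (E - u)) x := (ht1 a (E - u) x).symm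
    have e2 : g (m (p 1 a) (E - u)) x = g (E - u) (l a x) + D' a x := by
      have := ht2 a (E - u) x
      rwa [hπd, hD'R] at this
    have e3 : m (p a 1) (E - u) - m (p 1 a) (E - u) = k a - m (k a) u := by
      have h5 : m (k a) (E - u) = k a - m (k a) u := by
        rw [map_sub (m (k a)), hmE2]
      rw [← h5]
      simp only [hkdef, map_sub, ContinuousLinearMap.sub_apply]
      abel
    have e4 : g (m (p a 1) (E - u)) x - g (m (p 1 a) (E - u)) x = g (k a - m (k a) u) x := by
      rw [← e3, map_sub g, ContinuousLinearMap.sub_apply]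
    rw [e1]
    linear_combination e4 + e2
  -- the filter of approximate identities
  haveI hNT : Nonempty T := ⟨0⟩
  set V : Finset T × {ε : ℝ // 0 < ε} → Set T := fun i =>
    {u | πh u = 0 ∧ ‖u‖ ≤ M ∧ ∀ y ∈ i.1, πh y = 0 → ‖m y u - y‖ < i.2.1} with hVdef
  have hVne : ∀ i, (V i).Nonempty := by
    rintro ⟨s, ε, hε⟩
    obtain ⟨u, hu0, huM, hus⟩ := hM (s.filter fun y => πh y = 0)
      (fun y hy => (Finset.mem_filter.mp hy).2) ε hε
    exact ⟨u, hu0, huM, fun y hy hy0 => hus y (Finset.mem_filter.mpr ⟨hy, hy0⟩)⟩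
  set F : Filter T := ⨅ i, Filter.principal (V i) with hFdef
  have hdir : Directed (· ≥ ·) fun i => Filter.principal (V i) := by
    rintro ⟨s₁, ε₁, hε₁⟩ ⟨s₂, ε₂, hε₂⟩
    refine ⟨⟨s₁ ∪ s₂, ⟨min ε₁ ε₂, lt_min hε₁ hε₂⟩⟩, ?_, ?_⟩
    · refine Filter.principal_mono.mpr ?_
      rintro u ⟨hu0, huM, hus⟩
      exact ⟨hu0, huM, fun y hy hy0 =>
        lt_of_lt_of_le (hus y (Finset.mem_union_left _ hy) hy0) (min_le_left _ _)⟩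
    · refine Filter.principal_mono.mpr ?_
      rintro u ⟨hu0, huM, hus⟩
      exact ⟨hu0, huM, fun y hy hy0 =>
        lt_of_lt_of_le (hus y (Finset.mem_union_right _ hy) hy0) (min_le_right _ _)⟩
  haveI hFne : F.NeBot := Filter.iInf_neBot_of_directed hdir
    (fun i => Filter.principal_neBot_iff.mpr (hVne i))
  have hVF : ∀ i, V i ∈ F := fun i => Filter.mem_iInf_of_mem i (Filter.mem_principal_self _)
  -- the map into the weak-star dual and the cluster point
  set ψ : T → WeakDual ℂ X := fun u => StrongDual.toWeakDual (g (E - u)) with hψdef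
  haveI : (Filter.map ψ F).NeBot := Filter.map_neBot
  have hK : IsCompact (WeakDual.toStrongDual ⁻¹' closedBall (0 : StrongDual ℂ X) (‖g‖ * (1 + M))) :=
    WeakDual.isCompact_closedBall 0 (‖g‖ * (1 + M))
  have hKmem : WeakDual.toStrongDual ⁻¹' closedBall (0 : StrongDual ℂ X) (‖g‖ * (1 + M))
      ∈ Filter.map ψ F := by
    refine Filter.mem_map.mpr (Filter.mem_of_superset (hVF (∅, ⟨1, one_pos⟩)) ?_)
    rintro u ⟨hu0, huM, -⟩
    simp only [Set.mem_preimage, mem_closedBall_zero_iff]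
    show ‖g (E - u)‖ ≤ ‖g‖ * (1 + M)
    calc ‖g (E - u)‖ ≤ ‖g‖ * ‖E - u‖ := g.le_opNorm _
      _ ≤ ‖g‖ * (1 + M) := by
          refine mul_le_mul_of_nonneg_left ?_ (norm_nonneg g)
          calc ‖E - u‖ ≤ ‖E‖ + ‖u‖ := norm_sub_le _ _
            _ ≤ 1 + M := add_le_add hnE huM
  obtain ⟨f₀, hf₀K, hf₀⟩ := hK.exists_clusterPt (Filter.le_principal_iff.mpr hKmem)
  -- the limit identity
  have hlim : ∀ (a : A) (x : X),
      Filter.Tendsto (fun u => g (E - u) (r x a) - g (E - u) (l a x)) F (𝓝 (D' a x)) := by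
    intro a x
    have heq : ∀ᶠ u in F, g (E - u) (r x a) - g (E - u) (l a x)
        = g (k a - m (k a) u) x + D' a x := by
      filter_upwards [hVF (∅, ⟨1, one_pos⟩)] with u hu
      exact hkey a x u hu.1
    rw [Filter.tendsto_congr' heq]
    have h0 : Filter.Tendsto (fun u => g (k a - m (k a) u) x) F (𝓝 0) := by
      rw [Metric.tendsto_nhds]
      intro ε hε
      have hden : (0:ℝ) < ‖g‖ * ‖x‖ + 1 := by positivity
      have hδ : 0 < ε / (‖g‖ * ‖x‖ + 1) := div_pos hε hden
      filter_upwards [hVF ({k a}, ⟨ε / (‖g‖ * ‖x‖ + 1), hδ⟩)] with u hu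
      obtain ⟨hu0, huM, hus⟩ := hu
      have hb := hus (k a) (Finset.mem_singleton_self _) (hπk a)
      have h2 : ‖k a - m (k a) u‖ < ε / (‖g‖ * ‖x‖ + 1) := by
        rw [norm_sub_rev]; exact hb
      rw [dist_zero_right]
      have h1 : ‖g (k a - m (k a) u) x‖ ≤ (‖g‖ * ‖x‖) * ‖k a - m (k a) u‖ := by
        calc ‖g (k a - m (k a) u) x‖ ≤ ‖g (k a - m (k a) u)‖ * ‖x‖ := (g _).le_opNorm x
          _ ≤ (‖g‖ * ‖k a - m (k a) u‖) * ‖x‖ :=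
            mul_le_mul_of_nonneg_right (g.le_opNorm _) (norm_nonneg x)
          _ = (‖g‖ * ‖x‖) * ‖k a - m (k a) u‖ := by ring
      have h3 : (‖g‖ * ‖x‖) * ‖k a - m (k a) u‖ < (‖g‖ * ‖x‖ + 1) * (ε / (‖g‖ * ‖x‖ + 1)) := by
        have h4 : (‖g‖ * ‖x‖) * ‖k a - m (k a) u‖ ≤ (‖g‖ * ‖x‖) * (ε / (‖g‖ * ‖x‖ + 1)) :=
          mul_le_mul_of_nonneg_left h2.le (by positivity)
        have h5 : (‖g‖ * ‖x‖) * (ε / (‖g‖ * ‖x‖ + 1))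
            < (‖g‖ * ‖x‖ + 1) * (ε / (‖g‖ * ‖x‖ + 1)) :=
          mul_lt_mul_of_pos_right (lt_add_one _) hδ
        exact lt_of_le_of_lt h4 h5
      have h6 : (‖g‖ * ‖x‖ + 1) * (ε / (‖g‖ * ‖x‖ + 1)) = ε := by
        field_simp
      exact lt_of_le_of_lt h1 (by rw [← h6]; exact h3)
    have := h0.add_const (D' a x)
    simpa using this
  -- cluster point evaluates correctly
  have hf₀eq : ∀ (a : A) (x : X), f₀ (r x a) - f₀ (l a x) = D' a x := by
    intro a x
    have hcont : Continuous fun φ : WeakDual ℂ X => φ (r x a) - φ (l a x) :=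
      (WeakDual.eval_continuous _).sub (WeakDual.eval_continuous _)
    have hcp : ClusterPt (f₀ (r x a) - f₀ (l a x))
        (Filter.map (fun φ : WeakDual ℂ X => φ (r x a) - φ (l a x)) (Filter.map ψ F)) :=
      hf₀.map hcont.continuousAt Filter.tendsto_map
    rw [Filter.map_map] at hcp
    have hten : Filter.Tendsto ((fun φ : WeakDual ℂ X => φ (r x a) - φ (l a x)) ∘ ψ) F
        (𝓝 (D' a x)) := hlim a x
    exact eq_of_nhds_neBot (hcp.mono hten)
  -- conclusion
  refine ⟨WeakDual.toStrongDual f₀ + c.comp (r.flip 1) - c.comp (l 1), fun a x => ?_⟩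
  have hz1 : c (l a (r x 1)) = 0 := by
    have h := hstar (l a (r x 1))
    rw [hc a (r x 1) 1, hr1' x 1, hl1 a (r x 1)] at h
    exact left_eq_add.mp h
  have hz2 : c (r (l 1 x) a) = 0 := by
    have h := hstar (r (l 1 x) a)
    rw [hr1' (l 1 x) a, ← hc 1 (l 1 x) a, hl1 1 x] at h
    exact left_eq_add.mp h
  simp only [ContinuousLinearMap.sub_apply, ContinuousLinearMap.add_apply,
    ContinuousLinearMap.coe_comp', Function.comp_apply, ContinuousLinearMap.flip_apply]
  rw [hD'eq a x, hr1' x a, hc a x 1, hz1, ← hc 1 x a, hz2, hl1 a x]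
  have hfr : (WeakDual.toStrongDual f₀ : StrongDual ℂ X) (r x a) = f₀ (r x a) := rfl
  have hfl : (WeakDual.toStrongDual f₀ : StrongDual ℂ X) (l a x) = f₀ (l a x) := rfl
  rw [hfr, hfl]
  linear_combination -(hf₀eq a x)
end
end
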